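/- Let δ ∈ (0, 1/2] and 0 < m ≤ δ/2. Then the principal value integral ∫_0^δ dn/(m² − n²) satisfies |∫_0^δ dn/(m² − n²)| ≤ 4/(3δ). -/

import Mathlib

open MeasureTheory Real Filter

lemma two_log_le_aux (x : ℝ) (hx : 1 ≤ x) : 2 * Real.log x ≤ x - x⁻¹ := by
  have hmono : MonotoneOn (fun u : ℝ => u - u⁻¹ - 2 * Real.log u) (Set.Ici 1) := by
    apply monotoneOn_of_deriv_nonneg (convex_Ici 1)
    · apply ContinuousOn.sub
      · exact (continuousOn_id.sub (continuousOn_inv₀.mono (by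
          intro u hu
          have : (1:ℝ) ≤ u := hu
          simp only [Set.mem_compl_iff, Set.mem_singleton_iff]
          linarith)))
      · exact continuousOn_const.mul (Real.continuousOn_log.mono (by
          intro u hu
          have : (1:ℝ) ≤ u := hu
          simp only [Set.mem_compl_iff, Set.mem_singleton_iff]
          linarith))
    · intro u hu
      rw [interior_Ici] at hu
      have hu1 : (1:ℝ) < u := hu
      have hu0 : u ≠ 0 := by linarith
      exact ((differentiableAt_id.sub (differentiableAt_inv hu0)).sub
        ((Real.differentiableAt_log hu0).const_mul 2)).differentiableWithinAt
    · intro u hu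
      rw [interior_Ici] at hu
      have hu1 : (1:ℝ) < u := hu
      have hu0 : u ≠ 0 := by linarith
      have hd : HasDerivAt (fun u : ℝ => u - u⁻¹ - 2 * Real.log u)
          (1 - (-(u^2)⁻¹) - 2 * u⁻¹) u := by
        exact ((hasDerivAt_id u).sub (hasDerivAt_inv hu0)).sub
          ((Real.hasDerivAt_log hu0).const_mul 2)
      rw [hd.deriv]
      have h2 : (u⁻¹ - 1)^2 = 1 - (-(u^2)⁻¹) - 2 * u⁻¹ := by
        field_simp
        ring
      rw [← h2]
      positivity
  have h := hmono (Set.self_mem_Ici) (by exact hx : x ∈ Set.Ici 1) hx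
  simp only [Real.log_one, inv_one] at h
  linarith

theorem stmt10 (δ m : ℝ) (hδ0 : 0 < δ) (hδ : δ ≤ 1/2)
    (hm0 : 0 < m) (hm : m ≤ δ / 2) :
    ∃ I : ℝ,
      Filter.Tendsto
        (fun ε : ℝ =>
          (∫ n in (0:ℝ)..(m - ε), 1 / (m ^ 2 - n ^ 2)) +
          ∫ n in (m + ε)..δ, 1 / (m ^ 2 - n ^ 2))
        (nhdsWithin 0 (Set.Ioi 0)) (nhds I) ∧
      |I| ≤ 4 / (3 * δ) := by
  have hmδ : m < δ := by linarith
  set F : ℝ → ℝ := fun n => (1/(2*m)) * (Real.log (m+n) - Real.log (m-n)) with hF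
  set I : ℝ := (1/(2*m)) * (Real.log (m+δ) - Real.log (δ-m)) with hI
  -- FTC helper
  have key : ∀ a b : ℝ, (∀ n ∈ Set.uIcc a b, m + n ≠ 0 ∧ m - n ≠ 0) →
      ∫ n in a..b, 1 / (m^2 - n^2) = F b - F a := by
    intro a b hab
    apply intervalIntegral.integral_eq_sub_of_hasDerivAt
    · intro n hn
      obtain ⟨h1, h2⟩ := hab n hn
      have d1 : HasDerivAt (fun n : ℝ => Real.log (m+n)) (m+n)⁻¹ n := by
        have := (Real.hasDerivAt_log h1).comp n ((hasDerivAt_id n).const_add m)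
        simpa [Function.comp_def] using this
      have d2 : HasDerivAt (fun n : ℝ => Real.log (m-n)) (-(m-n)⁻¹) n := by
        have := (Real.hasDerivAt_log h2).comp n ((hasDerivAt_id n).neg.const_add m)
        simpa [Function.comp_def] using this
      have d : HasDerivAt F ((1/(2*m)) * ((m+n)⁻¹ - (-(m-n)⁻¹))) n :=
        (d1.sub d2).const_mul _
      refine d.congr_deriv ?_
      beta_reduce
      have hm2 : (2:ℝ)*m ≠ 0 := by positivity
      have hfac : m^2 - n^2 = (m+n)*(m-n) := by ring
      rw [hfac]
      field_simp
      ring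
    · apply ContinuousOn.intervalIntegrable
      apply ContinuousOn.div continuousOn_const (by fun_prop)
      intro n hn
      obtain ⟨h1, h2⟩ := hab n hn
      have : m^2 - n^2 = (m+n)*(m-n) := by ring
      rw [this]
      exact mul_ne_zero h1 h2
  refine ⟨I, ?_, ?_⟩
  · -- limit
    have hmem : Set.Ioo (0:ℝ) (min m (δ - m)) ∈ nhdsWithin (0:ℝ) (Set.Ioi 0) := by
      apply Ioo_mem_nhdsGT_of_mem
      exact ⟨le_refl 0, lt_min hm0 (by linarith)⟩
    have heq : ∀ᶠ ε in nhdsWithin (0:ℝ) (Set.Ioi 0),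
        ((∫ n in (0:ℝ)..(m - ε), 1 / (m ^ 2 - n ^ 2)) +
          ∫ n in (m + ε)..δ, 1 / (m ^ 2 - n ^ 2)) =
        (1/(2*m)) * (Real.log (2*m - ε) - Real.log (2*m + ε)) + I := by
      filter_upwards [hmem] with ε hε
      obtain ⟨hε0, hεm⟩ := hε
      have hε1 : ε < m := lt_of_lt_of_le hεm (min_le_left _ _)
      have hε2 : ε < δ - m := lt_of_lt_of_le hεm (min_le_right _ _)
      have e1 : ∫ n in (0:ℝ)..(m - ε), 1 / (m ^ 2 - n ^ 2) = F (m-ε) - F 0 := by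
        apply key
        intro n hn
        rw [Set.uIcc_of_le (by linarith)] at hn
        obtain ⟨hn1, hn2⟩ := hn
        constructor <;> intro h <;> nlinarith
      have e2 : ∫ n in (m + ε)..δ, 1 / (m ^ 2 - n ^ 2) = F δ - F (m+ε) := by
        apply key
        intro n hn
        rw [Set.uIcc_of_le (by linarith)] at hn
        obtain ⟨hn1, hn2⟩ := hn
        constructor <;> intro h <;> nlinarith
      rw [e1, e2]
      have hF0 : F 0 = 0 := by simp [hF]
      have hFme : F (m - ε) = (1/(2*m)) * (Real.log (2*m - ε) - Real.log ε) := by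
        simp only [hF]
        ring_nf
      have hFpe : F (m + ε) = (1/(2*m)) * (Real.log (2*m + ε) - Real.log ε) := by
        simp only [hF]
        have : m - (m + ε) = -ε := by ring
        rw [this, Real.log_neg_eq_log]
        ring_nf
      have hFδ : F δ = I := by
        simp only [hF, hI]
        have : m - δ = -(δ - m) := by ring
        rw [this, Real.log_neg_eq_log]
      rw [hF0, hFme, hFpe, hFδ]
      ring
    rw [Filter.tendsto_congr' heq]
    have h2m : (2*m : ℝ) ≠ 0 := by positivity
    have t1 : Filter.Tendsto (fun ε : ℝ => Real.log (2*m - ε)) (nhds 0)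
        (nhds (Real.log (2*m))) := by
      have : ContinuousAt (fun ε : ℝ => Real.log (2*m - ε)) 0 := by
        apply (Real.continuousAt_log (by simpa using h2m)).comp
        fun_prop
      simpa using this.tendsto
    have t2 : Filter.Tendsto (fun ε : ℝ => Real.log (2*m + ε)) (nhds 0)
        (nhds (Real.log (2*m))) := by
      have : ContinuousAt (fun ε : ℝ => Real.log (2*m + ε)) 0 := by
        apply (Real.continuousAt_log (by simpa using h2m)).comp
        fun_prop
      simpa using this.tendsto
    have : Filter.Tendsto
        (fun ε : ℝ => (1/(2*m)) * (Real.log (2*m - ε) - Real.log (2*m + ε)) + I)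
        (nhds 0) (nhds ((1/(2*m)) * (Real.log (2*m) - Real.log (2*m)) + I)) :=
      (((t1.sub t2).const_mul _).add tendsto_const_nhds)
    simp only [sub_self, mul_zero, zero_add] at this
    exact this.mono_left nhdsWithin_le_nhds
  · -- bound
    have hδm0 : (0:ℝ) < δ - m := by linarith
    have hx1 : (1:ℝ) ≤ (m + δ)/(δ - m) := by
      rw [le_div_iff₀ hδm0]; linarith
    have hlog : Real.log (m+δ) - Real.log (δ-m) = Real.log ((m+δ)/(δ-m)) := by
      rw [Real.log_div (by positivity) (by positivity)]
    have hlog0 : 0 ≤ Real.log ((m+δ)/(δ-m)) := Real.log_nonneg hx1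
    have hInn : 0 ≤ I := by
      rw [hI, hlog]
      positivity
    rw [abs_of_nonneg hInn, hI, hlog]
    have hkey := two_log_le_aux _ hx1
    have hxinv : ((m+δ)/(δ-m))⁻¹ = (δ-m)/(m+δ) := by rw [inv_div]
    rw [hxinv] at hkey
    have hsub : (m+δ)/(δ-m) - (δ-m)/(m+δ) = 4*m*δ/((δ-m)*(m+δ)) := by
      field_simp
      ring
    rw [hsub] at hkey
    -- so log x ≤ 2mδ/((δ-m)(m+δ))
    have hb : (1/(2*m)) * Real.log ((m+δ)/(δ-m)) ≤
        (1/(2*m)) * (4*m*δ/((δ-m)*(m+δ)) / 2) := by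
      apply mul_le_mul_of_nonneg_left _ (by positivity)
      linarith
    apply le_trans hb
    have h1 : 1 / (2 * m) * (4 * m * δ / ((δ - m) * (m + δ)) / 2) =
        δ / ((δ - m) * (m + δ)) := by
      field_simp
      ring
    rw [h1, div_le_div_iff₀ (by positivity) (by positivity)]
    nlinarith [mul_nonneg (show (0:ℝ) ≤ δ - 2*m by linarith) (show (0:ℝ) ≤ δ + 2*m by linarith)]
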